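/- arXiv:1703.00043 — 2 statements merged into one kernel-verified Lean document; each statement's English description precedes it below -/
import Mathlib

section
/- Fix an integer t ≥ 1 and define the polynomial sequences P_0(r), P_1(r) ∈ ℝ[p] as in the context. Then for every even integer r with r ≥ 4·2^t, the coefficient of p in P_0(r) + P_1(r) satisfies [p](P_0(r) + P_1(r)) ≤ −(1/6)·2^t. -/
/-! ## Decision trees -/

/-- Binary decision trees over a variable index type `ι`.  An internal vertex
`node i t0 t1` queries variable `i`; the `0`-edge leads to `t0`, the `1`-edge to `t1`. -/
inductive DTree (ι : Type) : Type where
  | leaf : Bool → DTree ι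
  | node : ι → DTree ι → DTree ι → DTree ι

namespace DTree

variable {ι : Type}

/-- Evaluate a decision tree on an input. -/
def eval : DTree ι → (ι → Bool) → Bool
  | leaf b, _ => b
  | node i t0 t1, x => if x i then t1.eval x else t0.eval x

/-- Depth: the number of edges on the longest root-to-leaf path. -/
def depth : DTree ι → ℕ
  | leaf _ => 0
  | node _ t0 t1 => max t0.depth t1.depth + 1

/-- Distance from the root to the closest leaf. -/
def minLeafDepth : DTree ι → ℕ
  | leaf _ => 0
  | node _ t0 t1 => min t0.minLeafDepth t1.minLeafDepth + 1

/-- A tree is `t`-clipped if every vertex is within distance `t` of some leaf. -/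
def Clipped (t : ℕ) : DTree ι → Prop
  | leaf _ => True
  | node _ t0 t1 =>
      min t0.minLeafDepth t1.minLeafDepth + 1 ≤ t ∧ Clipped t t0 ∧ Clipped t t1

/-- No variable in `seen` (nor any variable already queried above) is queried again:
this captures "no variable appears more than once on any root-to-leaf path". -/
def ReadOnceFrom : List ι → DTree ι → Prop
  | _, leaf _ => True
  | seen, node i t0 t1 =>
      i ∉ seen ∧ ReadOnceFrom (i :: seen) t0 ∧ ReadOnceFrom (i :: seen) t1

/-- No variable appears more than once on any root-to-leaf path. -/
def ReadOnce (T : DTree ι) : Prop := T.ReadOnceFrom []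

/-- `T` computes the boolean function `f`. -/
def Computes (T : DTree ι) (f : (ι → Bool) → Bool) : Prop := ∀ x, T.eval x = f x

/-- The list of all variables labelling internal vertices of the tree. -/
def nodeVars : DTree ι → List ι
  | leaf _ => []
  | node i t0 t1 => i :: (t0.nodeVars ++ t1.nodeVars)

/-- The tree has some leaf labelled `b`. -/
def HasLeaf (b : Bool) : DTree ι → Prop
  | leaf c => c = b
  | node _ t0 t1 => HasLeaf b t0 ∨ HasLeaf b t1

/-- From every internal vertex there is a path to a leaf labelled 0 (`false`)
and a path to a leaf labelled 1 (`true`). -/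
def EverySplit : DTree ι → Prop
  | leaf _ => True
  | node _ t0 t1 =>
      (HasLeaf true t0 ∨ HasLeaf true t1) ∧ (HasLeaf false t0 ∨ HasLeaf false t1) ∧
        EverySplit t0 ∧ EverySplit t1

/-- Variable `y` labels some internal vertex at distance `d` (edges) from the root. -/
def OccursAt (y : ι) : ℕ → DTree ι → Prop
  | _, leaf _ => False
  | 0, node i _ _ => i = y
  | d + 1, node _ t0 t1 => OccursAt y d t0 ∨ OccursAt y d t1

end DTree

/-- `DTdepth f` is the minimum depth of a decision tree computing `f`. -/
noncomputable def DTdepth {ι : Type} (f : (ι → Bool) → Bool) : ℕ :=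
  sInf {d | ∃ T : DTree ι, T.ReadOnce ∧ T.Computes f ∧ T.depth ≤ d}

/-! ## Restrictions -/

/-- The function obtained by fixing each variable `i` with `ρ i = some b` to `b`
(variables with `ρ i = none`, i.e. assigned `*`, are left free). -/
def restrictFun {ι : Type} (f : (ι → Bool) → Bool) (ρ : ι → Option Bool) :
    (ι → Bool) → Bool :=
  fun x => f (fun i => (ρ i).getD (x i))

open Classical in
/-- The probability of the event `E` under a random `p`-restriction: each variable
independently gets `*` (i.e. `none`) with probability `p`, and each of the values
`0`, `1` with probability `(1-p)/2`. -/
noncomputable def restrProb {ι : Type} [Fintype ι] [DecidableEq ι] (p : ℝ)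
    (E : (ι → Option Bool) → Prop) : ℝ :=
  ∑ ρ : ι → Option Bool,
    (if E ρ then ∏ i : ι, (if ρ i = none then p else (1 - p) / 2) else 0)

/-! ## Tree tribes -/

/-- The variable index type of the complete `t`-clipped tree `W_t(r)` on `r` levels:
the first block `v_1, …, v_t`, plus, for each `k < t`, a fresh copy of the variables
of `W_t(r-1)` hanging off the 1-edge of `v_{k+1}`. -/
def XiVars (t : ℕ) : ℕ → Type
  | 0 => Empty
  | r + 1 => Fin t ⊕ (Fin t × XiVars t r)

instance XiVars.instFintype (t : ℕ) : ∀ r, Fintype (XiVars t r)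
  | 0 => inferInstanceAs (Fintype Empty)
  | r + 1 =>
      letI := XiVars.instFintype t r
      inferInstanceAs (Fintype (Fin t ⊕ (Fin t × XiVars t r)))

instance XiVars.instDecidableEq (t : ℕ) : ∀ r, DecidableEq (XiVars t r)
  | 0 => inferInstanceAs (DecidableEq Empty)
  | r + 1 =>
      letI := XiVars.instDecidableEq t r
      inferInstanceAs (DecidableEq (Fin t ⊕ (Fin t × XiVars t r)))

/-- The `t`-clipped xor tree tribe `Ξ_t(r)`: the function computed by `W_t(r)` with
each leaf labelled by the parity of the edge labels on its root-to-leaf path.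
Following the 0-edges `v_1 → v_2 → ⋯` until the first variable with value 1 (if any),
whose 1-edge leads to a fresh copy computing the negation of `Ξ_t(r-1)`. -/
def Xi (t : ℕ) : ∀ r, (XiVars t r → Bool) → Bool
  | 0, _ => false
  | r + 1, x =>
      match (List.finRange t).find? (fun i => x (Sum.inl i)) with
      | none => false
      | some k => ! Xi t r (fun v => x (Sum.inr (k, v)))

namespace XiVars

/-- The list of 1-branch positions (0-indexed within each block) taken on the path
from the root to the block containing the given variable. -/
def branches {t : ℕ} : ∀ {r : ℕ}, XiVars t r → List (Fin t)
  | 0, v => nomatch v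
  | _ + 1, Sum.inl _ => []
  | _ + 1, Sum.inr (k, w) => k :: branches w

/-- The (0-indexed) position of the variable within its block. -/
def pos {t : ℕ} : ∀ {r : ℕ}, XiVars t r → Fin t
  | 0, v => nomatch v
  | _ + 1, Sum.inl i => i
  | _ + 1, Sum.inr (_, w) => pos w

/-- The level of a variable: the recursive step at which it was added (level 1 is the
outermost block). -/
def level {t r : ℕ} (v : XiVars t r) : ℕ := (branches v).length + 1

/-- The distance (number of edges) from the root of `W_t(r)` to the vertex of `v`. -/
def rootDist {t r : ℕ} (v : XiVars t r) : ℕ :=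
  ((branches v).map (fun b => (b : ℕ) + 1)).sum + (pos v : ℕ)

/-- The distance from the vertex of `v` to the closest leaf of `W_t(r)`. -/
def leafDist {t r : ℕ} (v : XiVars t r) : ℕ :=
  min (t - (pos v : ℕ)) (1 + min t (r - level v))

/-- A root-to-leaf path of `W_t(r)` is determined by the list `L` of 1-branch positions
it takes (with `L.length ≤ r`); `v.onPath L` says the vertex of `v` lies on that path. -/
def onPath {t r : ℕ} (v : XiVars t r) (L : List (Fin t)) : Prop :=
  branches v = L ∨
    (branches v <+: L ∧ branches v ≠ L ∧
      ∃ b : Fin t, L[(branches v).length]? = some b ∧ pos v ≤ b)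

end XiVars

/-- For `t = 1`, `Ξ_1(n)` is computed by a path on `n` variables: vertex `x_i` has a
0-edge to a leaf and a 1-edge to `x_{i+1}`, leaves labelled by the parity of the edge
labels from the root. -/
def Xi1 : ∀ n, (Fin n → Bool) → Bool
  | 0, _ => false
  | n + 1, x => if x 0 then ! Xi1 n (fun i => x i.succ) else false

/-! ## Fourier coefficients -/

/-- The Fourier coefficient `f̂_S` of a boolean function, viewed as a function
`{−1,1}^n → {−1,1}` via the identification `false ↔ +1`, `true ↔ −1`:
`f̂_S = E_x[f(x) ∏_{i ∈ S} x_i]` over a uniformly random input. -/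
noncomputable def fourierCoeffB {ι : Type} [Fintype ι] [DecidableEq ι]
    (f : (ι → Bool) → Bool) (S : Finset ι) : ℝ :=
  (∑ x : ι → Bool,
      (if f x then (-1 : ℝ) else 1) * ∏ i ∈ S, (if x i then (-1 : ℝ) else 1)) /
    2 ^ Fintype.card ι

/-- The `i`-th Jacobsthal number `J_i = (2^i − (−1)^i)/3`, as a real number. -/
noncomputable def jacobsthal (i : ℕ) : ℝ := (2 ^ i - (-1) ^ i) / 3

/-- The parity (mod-2 sum) of all the bits of `x`. -/
def parityBool {ι : Type} [Fintype ι] [DecidableEq ι] (x : ι → Bool) : Bool :=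
  decide ((Finset.univ.filter fun i => x i = true).card % 2 = 1)

/-! ## The probabilities `P_0(r)`, `P_1(r)` and `γ_d(r)` -/

/-- `P_0(r)`: the probability that `Ξ_t(r)` restricted by a random `p`-restriction is
the identically-`0` function. -/
noncomputable def Pzero (t : ℕ) (p : ℝ) (r : ℕ) : ℝ :=
  restrProb p (fun ρ : XiVars t r → Option Bool => ∀ x, restrictFun (Xi t r) ρ x = false)

/-- `P_1(r)`: the probability that `Ξ_t(r)` restricted by a random `p`-restriction is
the identically-`1` function. -/
noncomputable def Pone (t : ℕ) (p : ℝ) (r : ℕ) : ℝ :=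
  restrProb p (fun ρ : XiVars t r → Option Bool => ∀ x, restrictFun (Xi t r) ρ x = true)

/-- `γ_d(r) = Pr_ρ[DT_depth(Ξ_t(r)|_ρ) ≥ d]` for a random `p`-restriction `ρ`. -/
noncomputable def gammaDT (t : ℕ) (p : ℝ) (d r : ℕ) : ℝ :=
  restrProb p (fun ρ : XiVars t r → Option Bool => d ≤ DTdepth (restrictFun (Xi t r) ρ))

/-! ## The polynomial sequences `P_0(r), P_1(r) ∈ ℝ[p]` -/

/-- The polynomial `q = (1 − p)/2 ∈ ℝ[p]`. -/
noncomputable def qP : Polynomial ℝ := Polynomial.C (1 / 2) * (1 - Polynomial.X)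

/-- The pair of polynomials `(P_0(r), P_1(r)) ∈ ℝ[p] × ℝ[p]`, defined by
`P_0(1) = q^t`, `P_1(1) = 1 − (1−q)^t`, and for `r ≥ 2`, with `U = P_1(r−1)` and
`V = P_0(r−1)`: `P_0(r) = q·U·∑_{k=0}^{t−1}(q+pU)^k + (q+pU)^t` and
`P_1(r) = q·V·∑_{k=0}^{t−1}(q+pV)^k`.  (The value at `r = 0` is junk.) -/
noncomputable def PP (t : ℕ) : ℕ → Polynomial ℝ × Polynomial ℝ
  | 0 => (1, 0)
  | 1 => (qP ^ t, 1 - (1 - qP) ^ t)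
  | r + 2 =>
      (qP * (PP t (r + 1)).2 *
          (∑ k ∈ Finset.range t, (qP + Polynomial.X * (PP t (r + 1)).2) ^ k) +
        (qP + Polynomial.X * (PP t (r + 1)).2) ^ t,
       qP * (PP t (r + 1)).1 *
          (∑ k ∈ Finset.range t, (qP + Polynomial.X * (PP t (r + 1)).1) ^ k))

/-- The polynomial `P_0(r) ∈ ℝ[p]`. -/
noncomputable def P0poly (t r : ℕ) : Polynomial ℝ := (PP t r).1

/-- The polynomial `P_1(r) ∈ ℝ[p]`. -/
noncomputable def P1poly (t r : ℕ) : Polynomial ℝ := (PP t r).2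

namespace PPaux
open Polynomial Finset

lemma coeff_one_eq (Q : Polynomial ℝ) : Q.coeff 1 = Q.derivative.eval 0 := by
  rw [← Polynomial.coeff_zero_eq_eval_zero, Polynomial.coeff_derivative]; norm_num

lemma qP_eval : qP.eval 0 = 1/2 := by simp [qP]

lemma qP_deriv : qP.derivative.eval 0 = -(1/2) := by
  simp [qP, derivative_mul]

lemma W_eval (U : Polynomial ℝ) : (qP + Polynomial.X * U).eval 0 = 1/2 := by simp [qP]

lemma W_deriv (U : Polynomial ℝ) :
    ((qP + Polynomial.X * U).derivative).eval 0 = U.eval 0 - 1/2 := by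
  simp [qP, derivative_mul]; ring

lemma pow_eval (U : Polynomial ℝ) (k : ℕ) :
    ((qP + Polynomial.X * U)^k).eval 0 = (1/2)^k := by
  rw [Polynomial.eval_pow, W_eval]

lemma pow_deriv (U : Polynomial ℝ) (k : ℕ) :
    (((qP + Polynomial.X * U)^k).derivative).eval 0
      = (k:ℝ)*(1/2)^(k-1)*(U.eval 0 - 1/2) := by
  rw [Polynomial.derivative_pow]
  simp only [Polynomial.eval_mul, Polynomial.eval_C, pow_eval, W_deriv]

lemma geom_half (t : ℕ) : ∑ k ∈ Finset.range t, ((1:ℝ)/2)^k = 2 - 2*(1/2)^t := by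
  induction t with
  | zero => simp
  | succ n ih => rw [Finset.sum_range_succ, ih]; ring

lemma geom_half' (t : ℕ) :
    ∑ k ∈ Finset.range t, (k:ℝ)*((1:ℝ)/2)^(k-1) = 4 - 4*((t:ℝ)+1)*(1/2)^t := by
  induction t with
  | zero => norm_num
  | succ n ih =>
    rw [Finset.sum_range_succ, ih]
    cases n with
    | zero => norm_num
    | succ m =>
      simp only [Nat.add_sub_cancel]
      push_cast
      ring

lemma sum_eval (U : Polynomial ℝ) (t : ℕ) :
    (∑ k ∈ Finset.range t, (qP + Polynomial.X * U)^k).eval 0 = 2 - 2*(1/2)^t := by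
  rw [Polynomial.eval_finset_sum]
  simp only [pow_eval]
  exact geom_half t

lemma sum_deriv (U : Polynomial ℝ) (t : ℕ) :
    ((∑ k ∈ Finset.range t, (qP + Polynomial.X * U)^k).derivative).eval 0
      = (4 - 4*((t:ℝ)+1)*(1/2)^t) * (U.eval 0 - 1/2) := by
  rw [Polynomial.derivative_sum, Polynomial.eval_finset_sum]
  simp only [pow_deriv]
  rw [← Finset.sum_mul, geom_half']

end PPaux

namespace PPaux
open Polynomial Finset

/-- constant-coefficient sequence -/
noncomputable def cseq (t : ℕ) : ℕ → ℝ
  | 0 => 1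
  | r + 1 => 1 - (1 - (1/2)^t) * cseq t r

/-- the forcing term for the linear-coefficient recurrence -/
noncomputable def Ff (t : ℕ) (c : ℝ) : ℝ :=
  -(1 - (1/2)^t) + (4 - 4*((t:ℝ)+1)*(1/2)^t) * (c - 1/2)^2
    - 2*(t:ℝ)*(1/2)^t*(c - 1/2)

/-- linear-coefficient-sum sequence -/
noncomputable def sseq (t : ℕ) : ℕ → ℝ
  | 0 => 0
  | r + 1 => (1 - (1/2)^t) * sseq t r + Ff t (cseq t r)

lemma key (t : ℕ) (ht : 1 ≤ t) : ∀ r : ℕ,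
    (PP t r).1.eval 0 = cseq t r ∧ (PP t r).2.eval 0 = 1 - cseq t r ∧
    (PP t r).1.derivative.eval 0 + (PP t r).2.derivative.eval 0 = sseq t r := by
  obtain ⟨t0, rfl⟩ : ∃ t0, t = t0 + 1 := ⟨t - 1, (Nat.succ_pred_eq_of_pos ht).symm⟩
  set t := t0 + 1 with hT
  intro r
  induction r with
  | zero => simp [PP, cseq, sseq, Ff]
  | succ n ih =>
    cases n with
    | zero =>
      refine ⟨?_, ?_, ?_⟩
      · show (qP ^ t).eval 0 = cseq t 1
        simp only [eval_pow, qP_eval, cseq]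
        ring
      · show (1 - (1 - qP) ^ t).eval 0 = 1 - cseq t 1
        simp only [eval_sub, eval_one, eval_pow, qP_eval, cseq]
        norm_num
      · show ((qP ^ t).derivative).eval 0 + ((1 - (1-qP)^t).derivative).eval 0 = sseq t 1
        rw [Polynomial.derivative_pow, Polynomial.derivative_sub,
          Polynomial.derivative_one, Polynomial.derivative_pow,
          Polynomial.derivative_sub, Polynomial.derivative_one]
        simp only [eval_add, eval_mul, eval_sub, eval_pow, eval_C, eval_zero, eval_one,
          zero_sub, eval_neg, qP_eval, qP_deriv, sseq, cseq, Ff, hT, Nat.add_sub_cancel]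
        push_cast
        ring
    | succ m =>
      obtain ⟨h1, h2, h3⟩ := ih
      have hPP : PP t (m + 2) =
        (qP * (PP t (m + 1)).2 *
            (∑ k ∈ Finset.range t, (qP + Polynomial.X * (PP t (m + 1)).2) ^ k) +
          (qP + Polynomial.X * (PP t (m + 1)).2) ^ t,
         qP * (PP t (m + 1)).1 *
            (∑ k ∈ Finset.range t, (qP + Polynomial.X * (PP t (m + 1)).1) ^ k)) := rfl
      rw [hPP]
      refine ⟨?_, ?_, ?_⟩
      · simp only [eval_add, eval_mul, qP_eval, sum_eval, pow_eval, h2]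
        show _ = 1 - (1 - (1/2:ℝ)^t) * cseq t (m+1)
        ring
      · simp only [eval_mul, qP_eval, sum_eval, h1]
        show _ = 1 - (1 - (1 - (1/2:ℝ)^t) * cseq t (m+1))
        ring
      · simp only [Polynomial.derivative_add, Polynomial.derivative_mul, eval_add, eval_mul,
          qP_eval, qP_deriv, sum_eval, sum_deriv, pow_eval, pow_deriv, h1, h2]
        show _ = (1 - (1/2:ℝ)^t) * sseq t (m+1) + Ff t (cseq t (m+1))
        simp only [Ff, hT, Nat.add_sub_cancel]
        push_cast
        linear_combination (1 - ((1:ℝ)/2)^(t0+1)) * h3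
end PPaux

namespace PPaux

lemma q_pos (t : ℕ) : (0:ℝ) < (1/2)^t := by positivity

lemma q_le_half (t : ℕ) (ht : 1 ≤ t) : ((1:ℝ)/2)^t ≤ 1/2 := by
  calc ((1:ℝ)/2)^t ≤ (1/2)^1 := pow_le_pow_of_le_one (by norm_num) (by norm_num) ht
  _ = 1/2 := pow_one _

lemma two_t_le : ∀ t : ℕ, 2*t ≤ 2^t := by
  intro t
  induction t with
  | zero => simp
  | succ n ih =>
    rcases Nat.eq_zero_or_pos n with h|h
    · subst h; norm_num
    · have h2 : 2 ≤ 2^n := by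
        calc 2 = 2^1 := rfl
        _ ≤ 2^n := Nat.pow_le_pow_right (by norm_num) h
      rw [pow_succ]; omega

lemma qtwot (t : ℕ) : ((1:ℝ)/2)^t * 2^t = 1 := by
  rw [← mul_pow]; norm_num

lemma tq_le (t : ℕ) : 2*(t:ℝ)*(1/2)^t ≤ 1 := by
  have h := two_t_le t
  have h' : (2*(t:ℝ)) ≤ 2^t := by exact_mod_cast h
  nlinarith [q_pos t, qtwot t]

lemma t1q_le (t : ℕ) (ht : 1 ≤ t) : ((t:ℝ)+1)*(1/2)^t ≤ 1 := by
  have h1 : ((t:ℝ)+1) ≤ 2*t := by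
    have : (1:ℝ) ≤ t := by exact_mod_cast ht
    linarith
  nlinarith [tq_le t, q_pos t]

lemma cbound (t : ℕ) (ht : 1 ≤ t) : ∀ r, 0 ≤ cseq t r ∧ cseq t r ≤ 1 := by
  intro r
  induction r with
  | zero => simp [cseq]
  | succ n ih =>
    have h1 := q_pos t
    have h2 := q_le_half t ht
    obtain ⟨ha, hb⟩ := ih
    constructor
    · show 0 ≤ 1 - (1 - (1/2)^t) * cseq t n
      nlinarith
    · show 1 - (1 - (1/2)^t) * cseq t n ≤ 1
      nlinarith

lemma Ff_nonpos (t : ℕ) (ht : 1 ≤ t) (c : ℝ) (h0 : 0 ≤ c) (h1 : c ≤ 1) :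
    Ff t c ≤ 0 := by
  have hq := q_pos t
  have hql := q_le_half t ht
  have hA : 0 ≤ 4 - 4*((t:ℝ)+1)*(1/2)^t := by nlinarith [t1q_le t ht]
  have htq : 0 ≤ (t:ℝ)*(1/2)^t := by positivity
  have hsq : 0 ≤ 1/4 - (c - 1/2)^2 := by nlinarith
  have h2c : 0 ≤ 1 + 2*(c - 1/2) := by nlinarith
  have k1 := mul_nonneg hA hsq
  have k2 := mul_nonneg htq h2c
  show -(1 - (1/2)^t) + (4 - 4*((t:ℝ)+1)*(1/2)^t) * (c - 1/2)^2
    - 2*(t:ℝ)*(1/2)^t*(c - 1/2) ≤ 0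
  nlinarith

lemma sseq_nonpos (t : ℕ) (ht : 1 ≤ t) : ∀ r, sseq t r ≤ 0 := by
  intro r
  induction r with
  | zero => simp [sseq]
  | succ n ih =>
    have hF := Ff_nonpos t ht (cseq t n) (cbound t ht n).1 (cbound t ht n).2
    have h1q : (0:ℝ) ≤ 1 - (1/2)^t := by linarith [q_le_half t ht]
    have := mul_nonpos_of_nonneg_of_nonpos h1q ih
    show (1 - (1/2)^t) * sseq t n + Ff t (cseq t n) ≤ 0
    linarith

/-- fixed point of the constant-coefficient recurrence, shifted by 1/2 -/
noncomputable def est (t : ℕ) : ℝ := (1/2)^t / (2*(2 - (1/2)^t))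

lemma est_nonneg (t : ℕ) (ht : 1 ≤ t) : 0 ≤ est t := by
  have h1 := q_le_half t ht
  have h2 := q_pos t
  unfold est
  apply div_nonneg h2.le
  nlinarith

lemma est_le (t : ℕ) (ht : 1 ≤ t) : est t ≤ (1/2)^t/3 := by
  have h1 := q_le_half t ht
  have h2 := q_pos t
  rw [est, div_le_div_iff₀ (by nlinarith) (by norm_num)]
  nlinarith

lemma ecl (t : ℕ) (ht : 1 ≤ t) :
    ∀ k, |cseq t (k+1) - 1/2 - est t| ≤ (1 - (1/2)^t)^k / 2 := by
  have h1 := q_le_half t ht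
  have h2 := q_pos t
  have h2q : (2:ℝ) - (1/2)^t ≠ 0 := by nlinarith
  intro k
  induction k with
  | zero =>
    have hc1 : cseq t 1 = (1/2)^t := by simp [cseq]
    rw [hc1, pow_zero]
    rw [abs_le]
    constructor
    · have := est_le t ht
      nlinarith
    · have := est_nonneg t ht
      nlinarith
  | succ n ih =>
    have hrec : cseq t (n+2) - 1/2 - est t
        = -((1 - (1/2)^t) * (cseq t (n+1) - 1/2 - est t)) := by
      have hest : est t * (2*(2 - (1/2)^t)) = (1/2)^t := by
        have h2t : (1:ℝ) ≤ 2^t := one_le_pow₀ (by norm_num)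
        rw [est]; field_simp
      show (1 - (1 - (1/2)^t) * cseq t (n+1)) - 1/2 - est t = _
      linear_combination (-(1/2:ℝ)) * hest
    rw [hrec, abs_neg, abs_mul, abs_of_nonneg (by linarith : (0:ℝ) ≤ 1 - (1/2)^t)]
    calc (1 - (1/2)^t) * |cseq t (n+1) - 1/2 - est t|
        ≤ (1 - (1/2)^t) * ((1 - (1/2)^t)^n / 2) :=
          mul_le_mul_of_nonneg_left ih (by linarith)
      _ = (1 - (1/2)^t)^(n+1) / 2 := by rw [pow_succ]; ring

lemma lam_half (t : ℕ) : (1 - (1/2:ℝ)^t)^(2^t) ≤ 1/2 := by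
  have h2 := q_pos t
  have hql : ((1:ℝ)/2)^t ≤ 1 := by
    apply pow_le_one₀ <;> norm_num
  have hb : (2:ℝ) ≤ (1 + (1/2)^t)^(2^t) := by
    have h := one_add_mul_le_pow (show (-2:ℝ) ≤ (1/2)^t by nlinarith) (2^t)
    have hc : ((2^t : ℕ):ℝ) * (1/2)^t = 1 := by
      push_cast
      rw [mul_comm]; exact qtwot t
    linarith [h, hc.ge]
  have hc : (1 - (1/2:ℝ)^t)^(2^t) * (1 + (1/2)^t)^(2^t) ≤ 1 := by
    rw [← mul_pow]
    apply pow_le_one₀ <;> nlinarith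
  have hql2 : ((1:ℝ)/2)^t ≤ 1 := by apply pow_le_one₀ <;> norm_num
  have hx : (0:ℝ) ≤ (1 - (1/2:ℝ)^t)^(2^t) := pow_nonneg (by linarith) _
  nlinarith

lemma lam_m (t : ℕ) : (1 - (1/2:ℝ)^t)^(3*2^t - 1) ≤ 1/4 := by
  have hn : 1 ≤ 2^t := Nat.one_le_two_pow
  have hsplit : 3*2^t - 1 = 2^t + 2^t + (2^t - 1) := by omega
  rw [hsplit, pow_add, pow_add]
  have h2 := q_pos t
  have hql : ((1:ℝ)/2)^t ≤ 1 := by apply pow_le_one₀ <;> norm_num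
  have h0 : (0:ℝ) ≤ 1 - (1/2)^t := by linarith
  have h1 : (1 - (1/2:ℝ)^t)^(2^t - 1) ≤ 1 := pow_le_one₀ h0 (by linarith)
  have hh := lam_half t
  have p1 : (0:ℝ) ≤ (1 - (1/2:ℝ)^t)^(2^t) := pow_nonneg h0 _
  have p2 : (0:ℝ) ≤ (1 - (1/2:ℝ)^t)^(2^t - 1) := pow_nonneg h0 _
  have hxx : (1 - (1/2:ℝ)^t)^(2^t) * (1 - (1/2:ℝ)^t)^(2^t) ≤ 1/4 := by nlinarith
  nlinarith [mul_nonneg p1 p1]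

set_option maxHeartbeats 1000000 in
lemma Ff_small (t : ℕ) (ht : 1 ≤ t) (j : ℕ) (hj : 3*2^t ≤ j + 1) :
    Ff t (cseq t (j+1)) ≤ -(1/3) := by
  have hq := q_pos t
  have hql := q_le_half t ht
  have h0 : (0:ℝ) ≤ 1 - (1/2)^t := by linarith
  have h1 : (1 - (1/2:ℝ)^t) ≤ 1 := by linarith
  have hj' : 3*2^t - 1 ≤ j := by omega
  have hx : (1 - (1/2:ℝ)^t)^j ≤ 1/4 :=
    le_trans (pow_le_pow_of_le_one h0 h1 hj') (lam_m t)
  have habs := ecl t ht j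
  set c := cseq t (j+1) with hc
  set e := c - 1/2 with he
  have hee : |e - est t| ≤ 1/8 := by
    rw [he]
    calc |c - 1/2 - est t| ≤ (1 - (1/2)^t)^j / 2 := habs
    _ ≤ 1/8 := by linarith
  rw [abs_le] at hee
  have hest0 := est_nonneg t ht
  have hest1 := est_le t ht
  have heL : -(1/8) ≤ e := by linarith
  have heU : e ≤ (1/2)^t/3 + 1/8 := by linarith
  have hA0 : (0:ℝ) ≤ 4 - 4*((t:ℝ)+1)*(1/2)^t := by nlinarith [t1q_le t ht]
  have ht2 : (2:ℝ) ≤ (t:ℝ)+1 := by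
    have : (1:ℝ) ≤ t := by exact_mod_cast ht
    linarith
  have hA1 : 4 - 4*((t:ℝ)+1)*(1/2)^t ≤ 4 - 8*(1/2)^t := by nlinarith
  have hAe : (4 - 4*((t:ℝ)+1)*(1/2)^t) * e^2 ≤ (4 - 8*(1/2)^t)*((1/2)^t/3 + 1/8)^2 := by
    have hsq : e^2 ≤ ((1/2)^t/3 + 1/8)^2 := by nlinarith
    nlinarith [sq_nonneg e, sq_nonneg ((1/2)^t/3 + 1/8)]
  have htt : -(2*(t:ℝ)*(1/2)^t*e) ≤ 1/8 := by
    have htq0 : (0:ℝ) ≤ 2*(t:ℝ)*(1/2)^t := by positivity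
    nlinarith [tq_le t]
  show -(1 - (1/2)^t) + (4 - 4*((t:ℝ)+1)*(1/2)^t) * e^2 - 2*(t:ℝ)*(1/2)^t*e ≤ -(1/3)
  nlinarith [hq, hql, sq_nonneg ((1/2:ℝ)^t - 1/2), sq_nonneg ((1/2:ℝ)^t),
    mul_nonneg hq.le (sq_nonneg ((1/2:ℝ)^t - 1/2))]

lemma sseq_descent (t : ℕ) (ht : 1 ≤ t) :
    ∀ k, sseq t (3*2^t + k) ≤ -(1 - (1 - (1/2)^t)^k)/(3*(1/2)^t) := by
  have hq := q_pos t
  have hql := q_le_half t ht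
  intro k
  induction k with
  | zero =>
    simpa using sseq_nonpos t ht (3*2^t + 0)
  | succ n ih =>
    obtain ⟨j, hj⟩ : ∃ j, 3*2^t + n = j + 1 := by
      have : 1 ≤ 2^t := Nat.one_le_two_pow
      exact ⟨3*2^t + n - 1, by omega⟩
    have hF : Ff t (cseq t (3*2^t + n)) ≤ -(1/3) := by
      rw [hj]; exact Ff_small t ht j (by omega)
    have hstep : sseq t (3*2^t + (n+1))
        = (1 - (1/2)^t) * sseq t (3*2^t + n) + Ff t (cseq t (3*2^t + n)) := rfl
    rw [hstep]
    have h1q : (0:ℝ) ≤ 1 - (1/2)^t := by linarith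
    calc (1 - (1/2)^t) * sseq t (3*2^t + n) + Ff t (cseq t (3*2^t + n))
        ≤ (1 - (1/2)^t) * (-(1 - (1 - (1/2)^t)^n)/(3*(1/2)^t)) + (-(1/3)) :=
          add_le_add (mul_le_mul_of_nonneg_left ih h1q) hF
      _ = -(1 - (1 - (1/2)^t)^(n+1))/(3*(1/2)^t) := by
          field_simp
          ring

end PPaux

/-- for every even `r ≥ 4·2^t`,
`[p](P_0(r) + P_1(r)) ≤ −(1/6)·2^t`. -/
theorem ppoly_linear_coeff_negative (t : ℕ) (ht : 1 ≤ t) (r : ℕ) (hreven : Even r)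
    (hr : 4 * 2 ^ t ≤ r) :
    (P0poly t r + P1poly t r).coeff 1 ≤ -(1 / 6) * 2 ^ t := by
  have hq := PPaux.q_pos t
  have hql := PPaux.q_le_half t ht
  obtain ⟨k, hk, hrk⟩ : ∃ k, r = 3*2^t + k ∧ 2^t ≤ k := ⟨r - 3*2^t, by omega, by omega⟩
  have hdes := PPaux.sseq_descent t ht k
  rw [← hk] at hdes
  have hkey := PPaux.key t ht r
  have hco : (P0poly t r + P1poly t r).coeff 1 = PPaux.sseq t r := by
    rw [P0poly, P1poly, Polynomial.coeff_add, PPaux.coeff_one_eq, PPaux.coeff_one_eq]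
    exact hkey.2.2
  rw [hco]
  have h0 : (0:ℝ) ≤ 1 - (1/2)^t := by linarith
  have h1 : (1 - (1/2:ℝ)^t) ≤ 1 := by linarith
  have hlk : (1 - (1/2:ℝ)^t)^k ≤ 1/2 :=
    le_trans (pow_le_pow_of_le_one h0 h1 hrk) (PPaux.lam_half t)
  have h3q : (0:ℝ) < 3*(1/2)^t := by positivity
  calc PPaux.sseq t r ≤ -(1 - (1 - (1/2)^t)^k)/(3*(1/2)^t) := hdes
    _ ≤ -(1/6) * 2^t := by
        rw [div_le_iff₀ h3q]
        nlinarith [PPaux.qtwot t, hlk]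
end

section
/- Fix an integer t ≥ 1 and define the polynomial sequences P_0(r), P_1(r) ∈ ℝ[p] as in the context. Then for every r ≥ 1, for each i ∈ {0,1}, and for every real number p with 0 ≤ p ≤ 2^{−t}/420, the tail of P_i(r) beyond the linear term is bounded: |∑_{j≥2} ([p^j]P_i(r))·p^{j−2}| ≤ 30·2^{2t}. -/
namespace PPTail

open Finset Polynomial


/-- `(1-x)^2 * ∑_{j<n} (j+1)x^j = 1 - (n+1)x^n + n x^{n+1}`. -/
lemma sum_shift_id (x : ℝ) : ∀ n : ℕ,
    (1 - x)^2 * (∑ j ∈ range n, ((j:ℝ)+1) * x^j) = 1 - ((n:ℝ)+1)*x^n + (n:ℝ)*x^(n+1) := by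
  intro n
  induction n with
  | zero => simp
  | succ n ih =>
    rw [Finset.sum_range_succ, mul_add, ih]
    push_cast
    ring

lemma sum_shift_le {x : ℝ} (hx0 : 0 ≤ x) (hx1 : x < 1) (n : ℕ) :
    (∑ j ∈ range n, ((j:ℝ)+1) * x^j) ≤ 1/(1-x)^2 := by
  have h1 : (0:ℝ) < (1-x)^2 := pow_pos (by linarith) 2
  rw [le_div_iff₀ h1, mul_comm, sum_shift_id]
  have hs : x^(n+1) = x^n * x := pow_succ x n
  nlinarith [pow_nonneg hx0 n, mul_nonneg (mul_nonneg (Nat.cast_nonneg (α := ℝ) n) (pow_nonneg hx0 n)) (by linarith : (0:ℝ) ≤ 1 - x)]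

lemma sum_k_le {x : ℝ} (hx0 : 0 ≤ x) (hx1 : x < 1) (n : ℕ) :
    (∑ k ∈ range n, (k:ℝ) * x^(k-1)) ≤ 1/(1-x)^2 := by
  cases n with
  | zero => simp; positivity
  | succ m =>
    rw [Finset.sum_range_succ']
    simp only [Nat.cast_zero, zero_mul, add_zero, Nat.add_sub_cancel]
    calc (∑ i ∈ range m, ((i+1:ℕ):ℝ) * x^i) = ∑ i ∈ range m, ((i:ℝ)+1) * x^i := by
          apply Finset.sum_congr rfl; intro i _; push_cast; ring
      _ ≤ 1/(1-x)^2 := sum_shift_le hx0 hx1 m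

lemma sum_pow_le {x : ℝ} (hx0 : 0 ≤ x) (hx1 : x < 1) (n : ℕ) :
    (∑ k ∈ range n, x^k) ≤ 1/(1-x) := by
  have h1 : (0:ℝ) < 1-x := by linarith
  rw [le_div_iff₀ h1]
  have := geom_sum_mul x n
  nlinarith [pow_nonneg hx0 n]

/-- `k (5/6)^k ≤ 201/100` for all `k : ℕ`. -/
lemma k_pow_le (k : ℕ) : (k:ℝ) * (5/6)^k ≤ 201/100 := by
  have h : ∀ k : ℕ, 100 * k * 5^k ≤ 201 * 6^k := by
    intro k
    induction k with
    | zero => norm_num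
    | succ n ih =>
      rcases Nat.lt_or_ge n 5 with h5 | h5
      · interval_cases n <;> norm_num
      · have : 100 * (n+1) * 5^(n+1) ≤ 6 * (100 * n * 5^n) := by
          have : 5 * (n+1) ≤ 6 * n := by omega
          calc 100 * (n+1) * 5^(n+1) = (5*(n+1)) * (100 * 5^n) := by ring
            _ ≤ (6*n) * (100*5^n) := by exact Nat.mul_le_mul_right _ this
            _ = 6 * (100 * n * 5^n) := by ring
        calc 100 * (n+1) * 5^(n+1) ≤ 6 * (100*n*5^n) := this
          _ ≤ 6 * (201 * 6^n) := by exact Nat.mul_le_mul_left _ ih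
          _ = 201 * 6^(n+1) := by ring
  have h' := h k
  have : ((100 * k * 5^k : ℕ) : ℝ) ≤ ((201 * 6^k : ℕ) : ℝ) := by exact_mod_cast h'
  push_cast at this
  have h6 : (0:ℝ) < 6^k := by positivity
  rw [div_pow, ← mul_div_assoc, div_le_div_iff₀ h6 (by norm_num : (0:ℝ) < 100)]
  linarith

/-- `t (3/5)^{t-1} ≤ 6/5` for all `t : ℕ`. -/
lemma t_pow_le (t : ℕ) : (t:ℝ) * (3/5)^(t-1) ≤ 6/5 := by
  cases t with
  | zero => norm_num
  | succ j =>
    simp only [Nat.succ_sub_one]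
    have h : ∀ j : ℕ, 5 * (j+1) * 3^j ≤ 6 * 5^j := by
      intro j
      induction j with
      | zero => norm_num
      | succ n ih =>
        rcases Nat.lt_or_ge n 1 with h1 | h1
        · interval_cases n <;> norm_num
        · calc 5 * (n+2) * 3^(n+1) = 3 * (n+2) * (5 * 3^n) := by ring
            _ ≤ (5*(n+1)) * (5*3^n) := by
                apply Nat.mul_le_mul_right; omega
            _ = 5 * (5*(n+1)*3^n) := by ring
            _ ≤ 5 * (6 * 5^n) := Nat.mul_le_mul_left _ ih
            _ = 6 * 5^(n+1) := by ring
    have h' := h j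
    have : ((5 * (j+1) * 3^j : ℕ) : ℝ) ≤ ((6 * 5^j : ℕ) : ℝ) := by exact_mod_cast h'
    push_cast at this
    have h5 : (0:ℝ) < 5^j := by positivity
    push_cast
    rw [div_pow, ← mul_div_assoc, div_le_div_iff₀ h5 (by norm_num : (0:ℝ) < 5)]
    linarith

lemma two_t_le (t : ℕ) (ht : 1 ≤ t) : 2 * (t:ℝ) ≤ 2^t := by
  have h : ∀ t : ℕ, 1 ≤ t → 2 * t ≤ 2^t := by
    intro t ht
    induction t with
    | zero => omega
    | succ n ih =>
      rcases Nat.lt_or_ge n 1 with h1 | h1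
      · interval_cases n <;> norm_num
      · have := ih h1
        have h2 : 2 ≤ 2^n := by
          calc 2 = 2*1 := rfl
            _ ≤ 2*n := by omega
            _ ≤ 2^n := this
        rw [pow_succ]; omega
  have := h t ht
  exact_mod_cast this



/-- Product rule for second-order approximations. -/
lemma approx_mul {x a b e y a' b' e' My p : ℝ} (hp : 0 ≤ p)
    (hx : |x - a - b * p| ≤ e * p ^ 2) (hy : |y - a' - b' * p| ≤ e' * p ^ 2)
    (hMy : |y| ≤ My) :
    |x * y - a * a' - (a * b' + a' * b) * p|
      ≤ (e * My + (|a| + |b| * p) * e' + |b| * |b'|) * p ^ 2 := by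
  have key : x * y - a * a' - (a * b' + a' * b) * p
      = (x - a - b * p) * y + (a + b * p) * (y - a' - b' * p) + b * b' * p ^ 2 := by ring
  rw [key]
  have h1 : |(x - a - b * p) * y| ≤ (e * p ^ 2) * My := by
    rw [abs_mul]
    exact mul_le_mul hx hMy (abs_nonneg _) (le_trans (abs_nonneg _) hx)
  have h2 : |(a + b * p) * (y - a' - b' * p)| ≤ (|a| + |b| * p) * (e' * p ^ 2) := by
    rw [abs_mul]
    apply mul_le_mul _ hy (abs_nonneg _) (by positivity)
    calc |a + b * p| ≤ |a| + |b * p| := abs_add_le _ _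
      _ = |a| + |b| * p := by rw [abs_mul, abs_of_nonneg hp]
  have h3 : |b * b' * p ^ 2| = |b| * |b'| * p ^ 2 := by
    rw [abs_mul, abs_mul, abs_of_nonneg (by positivity : (0:ℝ) ≤ p ^ 2)]
  calc |(x - a - b * p) * y + (a + b * p) * (y - a' - b' * p) + b * b' * p ^ 2|
      ≤ |(x - a - b * p) * y + (a + b * p) * (y - a' - b' * p)| + |b * b' * p ^ 2| :=
        abs_add_le _ _
    _ ≤ |(x - a - b * p) * y| + |(a + b * p) * (y - a' - b' * p)| + |b * b' * p ^ 2| := by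
        have := abs_add_le ((x - a - b * p) * y) ((a + b * p) * (y - a' - b' * p)); linarith
    _ ≤ (e * p ^ 2) * My + (|a| + |b| * p) * (e' * p ^ 2) + |b| * |b'| * p ^ 2 := by
        rw [h3]; linarith
    _ = (e * My + (|a| + |b| * p) * e' + |b| * |b'|) * p ^ 2 := by ring

/-- Bernoulli-type: `|(1-x)^t - 1 + t x| ≤ t² x²` for `x ∈ [0,1]`. -/
lemma bern_neg (x : ℝ) (hx0 : 0 ≤ x) (hx1 : x ≤ 1) : ∀ t : ℕ,
    |(1-x)^t - 1 + t*x| ≤ t^2 * x^2 := by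
  intro t
  induction t with
  | zero => simp
  | succ n ih =>
    push_cast
    have key : (1-x)^(n+1) - 1 + ((n:ℝ)+1)*x = (1-x)*((1-x)^n - 1 + n*x) + n*x^2 := by
      ring
    rw [key]
    calc |(1-x)*((1-x)^n - 1 + n*x) + n*x^2|
        ≤ |(1-x)*((1-x)^n - 1 + n*x)| + |(n:ℝ)*x^2| := abs_add_le _ _
      _ ≤ 1*(n^2*x^2) + n*x^2 := by
          gcongr
          · rw [abs_mul]
            apply mul_le_mul _ ih (abs_nonneg _) zero_le_one
            rw [abs_le]; constructor <;> linarith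
          · rw [abs_mul, abs_of_nonneg (by positivity : (0:ℝ) ≤ (n:ℝ)),
              abs_of_nonneg (by positivity : (0:ℝ) ≤ x^2)]
      _ ≤ ((n:ℝ)+1)^2 * x^2 := by nlinarith [sq_nonneg x]

/-- Bernoulli-type: `|(1+x)^t - 1 - t x| ≤ 2^t t² x²` for `x ∈ [0,1]`. -/
lemma bern_pos (x : ℝ) (hx0 : 0 ≤ x) (hx1 : x ≤ 1) : ∀ t : ℕ,
    |(1+x)^t - 1 - t*x| ≤ 2^t * t^2 * x^2 := by
  intro t
  induction t with
  | zero => simp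
  | succ n ih =>
    push_cast
    have key : (1+x)^(n+1) - 1 - ((n:ℝ)+1)*x = (1+x)*((1+x)^n - 1 - n*x) + n*x^2 := by
      ring
    rw [key]
    calc |(1+x)*((1+x)^n - 1 - n*x) + n*x^2|
        ≤ |(1+x)*((1+x)^n - 1 - n*x)| + |(n:ℝ)*x^2| := abs_add_le _ _
      _ ≤ 2*(2^n*n^2*x^2) + n*x^2 := by
          gcongr
          · rw [abs_mul]
            apply mul_le_mul _ ih (abs_nonneg _) (by norm_num)
            rw [abs_le]; constructor <;> linarith
          · rw [abs_mul, abs_of_nonneg (by positivity : (0:ℝ) ≤ (n:ℝ)),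
              abs_of_nonneg (by positivity : (0:ℝ) ≤ x^2)]
      _ ≤ 2^(n+1) * ((n:ℝ)+1)^2 * x^2 := by
          have h2n : (1:ℝ) ≤ 2^n := by
            have := pow_le_pow_left₀ (by norm_num : (0:ℝ) ≤ 1) (by norm_num : (1:ℝ) ≤ 2) n
            simpa using this
          have hn0 : (0:ℝ) ≤ (n:ℝ) := Nat.cast_nonneg n
          have hq : (n:ℝ) ≤ 2^n * (4*n+2) := by nlinarith
          have hkey := mul_nonneg (sub_nonneg.2 hq) (sq_nonneg x)
          have hps : (2:ℝ)^(n+1) = 2*2^n := by rw [pow_succ]; ring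
          have hdiff : (2:ℝ)^(n+1)*((n:ℝ)+1)^2*x^2 - (2*(2^n*(n:ℝ)^2*x^2) + n*x^2)
              = (2^n*(4*(n:ℝ)+2) - n)*x^2 := by rw [hps]; ring
          linarith [hkey, hdiff]

lemma half_shift (c : ℝ) (hc : 0 < c) : ∀ k : ℕ, c * ((k:ℝ) * c^(k-1)) = (k:ℝ) * c^k := by
  intro k
  cases k with
  | zero => simp
  | succ j =>
    simp only [Nat.succ_sub_one]
    rw [pow_succ]
    ring

lemma approx_pow {g g1 Kg p : ℝ} (hp : 0 ≤ p)
    (hg : |g - 1/2 - g1 * p| ≤ Kg * p ^ 2)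
    (hg1 : |g1| ≤ 1/2) (hgle : |g| ≤ 3/5) (hKg0 : 0 ≤ Kg) (hKgp : Kg * p ≤ 1/100) :
    ∀ k : ℕ, |g ^ k - (1/2) ^ k - ((k:ℝ) * (1/2) ^ (k - 1) * g1) * p|
      ≤ ((Kg + 11/10) * ((k:ℝ) * (3/5) ^ (k - 1))) * p ^ 2 := by
  intro k
  induction k with
  | zero => simp
  | succ k ih =>
    push_cast
    try simp only [Nat.add_sub_cancel]
    have habs : |(k:ℝ) * (1/2) ^ (k-1) * g1| ≤ (k:ℝ) * (1/2)^k := by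
      rw [abs_mul, abs_mul]
      rw [abs_of_nonneg (Nat.cast_nonneg (α := ℝ) k),
        abs_of_nonneg (by positivity : (0:ℝ) ≤ (1/2)^(k-1))]
      calc (k:ℝ) * (1/2)^(k-1) * |g1| ≤ (k:ℝ) * (1/2)^(k-1) * (1/2) := by
            apply mul_le_mul_of_nonneg_left hg1 (by positivity)
        _ = (k:ℝ) * (1/2)^k := by
            rw [mul_comm ((k:ℝ) * (1/2)^(k-1)) (1/2:ℝ), half_shift (1/2) (by norm_num) k]
    have key := approx_mul (x := g^k) (a := (1/2)^k) (b := (k:ℝ) * (1/2)^(k-1) * g1)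
      (e := (Kg + 11/10) * ((k:ℝ) * (3/5)^(k-1))) (y := g) (a' := 1/2) (b' := g1)
      (e' := Kg) (My := 3/5) hp ih hg hgle
    have hco : (1/2:ℝ)^k * g1 + 1/2 * ((k:ℝ) * (1/2)^(k-1) * g1)
        = ((k:ℝ)+1) * (1/2)^k * g1 := by
      have hh := half_shift (1/2 : ℝ) (by norm_num) k
      linear_combination g1 * hh
    have hgk : g^(k+1) = g^k * g := pow_succ g k
    have hhk : (1/2:ℝ)^(k+1) = (1/2)^k * (1/2) := pow_succ (1/2:ℝ) k
    have hgoal1 : g^(k+1) - (1/2)^(k+1) - (((k:ℝ)+1) * (1/2)^k * g1) * p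
        = g^k * g - (1/2)^k * (1/2) - ((1/2)^k * g1 + (1/2) * ((k:ℝ) * (1/2)^(k-1) * g1)) * p := by
      rw [hgk, hhk, hco]
    -- bound the error coefficient
    have herr : (Kg + 11/10) * ((k:ℝ) * (3/5)^(k-1)) * (3/5)
        + (|(1/2:ℝ)^k| + |(k:ℝ) * (1/2)^(k-1) * g1| * p) * Kg
        + |(k:ℝ) * (1/2)^(k-1) * g1| * |g1|
        ≤ (Kg + 11/10) * (((k:ℝ)+1) * (3/5)^k) := by
      have e1 : (Kg + 11/10) * ((k:ℝ) * (3/5)^(k-1)) * (3/5)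
          = (Kg + 11/10) * ((k:ℝ) * (3/5)^k) := by
        rw [mul_assoc, mul_comm ((k:ℝ) * (3/5)^(k-1)) ((3/5):ℝ), half_shift (3/5) (by norm_num) k]
      rw [e1, abs_of_nonneg (by positivity : (0:ℝ) ≤ (1/2:ℝ)^k)]
      have e2 : |(k:ℝ) * (1/2) ^ (k-1) * g1| * p ≤ (k:ℝ) * (1/2)^k * p :=
        mul_le_mul_of_nonneg_right habs hp
      have e3 : |(k:ℝ) * (1/2) ^ (k-1) * g1| * |g1| ≤ (k:ℝ) * (1/2)^k * (1/2) :=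
        mul_le_mul habs hg1 (abs_nonneg _) (by positivity)
      have e4 : (1/2:ℝ)^k ≤ (3/5)^k :=
        pow_le_pow_left₀ (by norm_num) (by norm_num) k
      have e5 : (k:ℝ) * (1/2)^k ≤ (201/100) * (3/5)^k := by
        have h56 : (1/2:ℝ)^k = (5/6)^k * (3/5)^k := by
          rw [← mul_pow]; norm_num
        rw [h56, ← mul_assoc]
        apply mul_le_mul_of_nonneg_right (k_pow_le k) (by positivity)
      have e6 : (k:ℝ) * (1/2)^k * p * Kg ≤ (k:ℝ) * (1/2)^k * (1/100) := by
        rw [mul_assoc]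
        apply mul_le_mul_of_nonneg_left _ (by positivity)
        calc p * Kg = Kg * p := by ring
          _ ≤ 1/100 := hKgp
      have e7 : (0:ℝ) ≤ (3/5)^k := by positivity
      have e8 : (0:ℝ) ≤ (k:ℝ) * (1/2)^k := by positivity
      nlinarith [e2, e3, e4, e5, e6, e7, e8,
        mul_le_mul_of_nonneg_right e4 hKg0,
        mul_le_mul_of_nonneg_right e2 hKg0]
    calc |g^(k+1) - (1/2)^(k+1) - ((k:ℝ)+1) * (1/2)^k * g1 * p|
        = |g^k * g - (1/2)^k * (1/2)
            - ((1/2)^k * g1 + (1/2) * ((k:ℝ) * (1/2)^(k-1) * g1)) * p| := by rw [← hgoal1]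
      _ ≤ ((Kg + 11/10) * ((k:ℝ) * (3/5)^(k-1)) * (3/5)
            + (|(1/2:ℝ)^k| + |(k:ℝ) * (1/2)^(k-1) * g1| * p) * Kg
            + |(k:ℝ) * (1/2)^(k-1) * g1| * |g1|) * p^2 := key
      _ ≤ ((Kg + 11/10) * (((k:ℝ)+1) * (3/5)^k)) * p^2 := by
          apply mul_le_mul_of_nonneg_right herr (by positivity)



/-- Extend a bound from `Ioc 0 ε` to `Icc 0 ε` by continuity. -/
lemma closure_bound {R : Polynomial ℝ} {g : ℝ → ℝ} (hg : Continuous g)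
    {ε : ℝ} (hε : 0 < ε) (h : ∀ p ∈ Set.Ioc 0 ε, |R.eval p| ≤ g p) :
    ∀ p ∈ Set.Icc 0 ε, |R.eval p| ≤ g p := by
  have hcl : IsClosed {x : ℝ | |R.eval x| ≤ g x} :=
    isClosed_le R.continuous.abs hg
  have hsub : Set.Ioc 0 ε ⊆ {x : ℝ | |R.eval x| ≤ g x} := fun x hx => h x hx
  have : Set.Icc 0 ε ⊆ {x : ℝ | |R.eval x| ≤ g x} := by
    rw [← closure_Ioc hε.ne]
    exact hcl.closure_subset_iff.mpr hsub
  exact fun p hp => this hp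

/-- Master lemma: a uniform second-order bound on values yields the tail bound. -/
lemma tail_bound_of_good (Q : Polynomial ℝ) (K A B ε : ℝ) (hε : 0 < ε) (hK : 0 ≤ K)
    (h : ∀ p ∈ Set.Ioc 0 ε, |Q.eval p - A - B * p| ≤ K * p ^ 2) :
    ∀ p ∈ Set.Icc 0 ε, |∑ j ∈ Finset.Icc 2 Q.natDegree, Q.coeff j * p ^ (j - 2)| ≤ K := by
  set R : Polynomial ℝ := Q - C A - C B * X with hR
  have hRe : ∀ p : ℝ, R.eval p = Q.eval p - A - B * p := by
    intro p; simp [hR]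
  have h1 : ∀ p ∈ Set.Ioc 0 ε, |R.eval p| ≤ K * p ^ 2 := by
    intro p hp; rw [hRe]; exact h p hp
  have hR0 : R.eval 0 = 0 := by
    have h0 := closure_bound (g := fun p => K * p ^ 2) (by fun_prop) hε h1 0
      ⟨le_refl 0, hε.le⟩
    simp only [mul_zero, ne_eq, OfNat.ofNat_ne_zero, not_false_eq_true, zero_pow] at h0
    exact abs_eq_zero.mp (le_antisymm h0 (abs_nonneg _))
  obtain ⟨R1, hR1⟩ : X ∣ R := by
    have hroot : IsRoot R 0 := hR0
    simpa using (dvd_iff_isRoot (p := R) (a := 0)).mpr hroot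
  have h2 : ∀ p ∈ Set.Ioc 0 ε, |R1.eval p| ≤ K * p := by
    intro p hp
    have hb := h1 p hp
    rw [hR1] at hb
    simp only [eval_mul, eval_X] at hb
    rw [abs_mul, abs_of_pos hp.1] at hb
    have hm : |R1.eval p| * p ≤ (K * p) * p := by nlinarith [hb]
    exact le_of_mul_le_mul_right hm hp.1
  have hR10 : R1.eval 0 = 0 := by
    have h0 := closure_bound (g := fun p => K * p) (by fun_prop) hε h2 0
      ⟨le_refl 0, hε.le⟩
    simp only [mul_zero] at h0
    exact abs_eq_zero.mp (le_antisymm h0 (abs_nonneg _))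
  obtain ⟨R2, hR2⟩ : X ∣ R1 := by
    have hroot : IsRoot R1 0 := hR10
    simpa using (dvd_iff_isRoot (p := R1) (a := 0)).mpr hroot
  have h3 : ∀ p ∈ Set.Ioc 0 ε, |R2.eval p| ≤ K := by
    intro p hp
    have hb := h1 p hp
    rw [hR1, hR2] at hb
    simp only [eval_mul, eval_X] at hb
    have hp2 : (0:ℝ) < p ^ 2 := pow_pos hp.1 2
    rw [show p * (p * R2.eval p) = R2.eval p * p ^ 2 by ring, abs_mul,
      abs_of_pos hp2] at hb
    exact le_of_mul_le_mul_right hb hp2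
  have h4 : ∀ p ∈ Set.Icc 0 ε, |R2.eval p| ≤ K :=
    closure_bound (g := fun _ => K) continuous_const hε h3
  have hQ : Q = C A + C B * X + X ^ 2 * R2 := by
    have hx : R = X ^ 2 * R2 := by rw [hR1, hR2]; ring
    rw [hR] at hx
    linear_combination (norm := ring_nf) hx
  have hcoeff : ∀ j : ℕ, 2 ≤ j → Q.coeff j = R2.coeff (j - 2) := by
    intro j hj
    rw [hQ]
    obtain ⟨i, rfl⟩ : ∃ i, j = i + 2 := ⟨j - 2, by omega⟩
    rw [coeff_add, coeff_add, coeff_X_pow_mul R2 2 i, coeff_C, coeff_C_mul, coeff_X]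
    have e1 : i + 2 ≠ 0 := by omega
    have e2 : ¬ (i + 2 = 1) := by omega
    simp [e1, e2, Nat.add_sub_cancel]
  intro p hp
  have key : ∑ j ∈ Finset.Icc 2 Q.natDegree, Q.coeff j * p ^ (j - 2) = R2.eval p := by
    by_cases hR2z : R2 = 0
    · subst hR2z
      simp only [eval_zero]
      apply Finset.sum_eq_zero
      intro j hj
      rw [hcoeff j (Finset.mem_Icc.mp hj).1]
      simp
    · have hdeg : Q.natDegree = R2.natDegree + 2 := by
        have hx2 : (X ^ 2 * R2 : Polynomial ℝ).natDegree = 2 + R2.natDegree := by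
          rw [natDegree_mul (pow_ne_zero _ X_ne_zero) hR2z, natDegree_pow, natDegree_X]
        have hlow : (C A + C B * X : Polynomial ℝ).natDegree < (X ^ 2 * R2).natDegree := by
          rw [hx2]
          calc (C A + C B * X : Polynomial ℝ).natDegree
              ≤ max (C A).natDegree (C B * X).natDegree := natDegree_add_le _ _
            _ ≤ 1 := by
                apply max_le
                · simp
                · exact le_trans natDegree_mul_le (by simp)
            _ < 2 + R2.natDegree := by omega
        rw [hQ, natDegree_add_eq_right_of_natDegree_lt hlow, hx2, add_comm]
      have hset : Finset.Icc 2 (R2.natDegree + 2)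
          = (Finset.range (R2.natDegree + 1)).map ⟨fun i => i + 2, add_left_injective 2⟩ := by
        ext j
        simp only [Finset.mem_Icc, Finset.mem_map, Finset.mem_range,
          Function.Embedding.coeFn_mk]
        constructor
        · rintro ⟨ha1, ha2⟩; exact ⟨j - 2, by omega, by omega⟩
        · rintro ⟨i, hi, rfl⟩; omega
      rw [hdeg, hset, Finset.sum_map, eval_eq_sum_range]
      apply Finset.sum_congr rfl
      intro i _
      simp only [Function.Embedding.coeFn_mk]
      rw [hcoeff (i + 2) (by omega)]
      have hi2 : i + 2 - 2 = i := by omega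
      rw [hi2]
  rw [key]
  exact h4 p hp

/-- The induction invariant. -/
def Inv (t : ℕ) (Q : Polynomial ℝ) (A B : ℝ) : Prop :=
  0 ≤ A ∧ A ≤ 1 ∧ |B| ≤ 5/2 * 2^t ∧
  ∀ p ∈ Set.Icc (0:ℝ) ((1/2)^t/420),
    0 ≤ Q.eval p ∧ Q.eval p ≤ 1 ∧ |Q.eval p - A - B*p| ≤ 30*2^(2*t)*p^2

set_option maxHeartbeats 2000000 in
lemma core (t : ℕ) (ht : 1 ≤ t) (W : Polynomial ℝ) (A B : ℝ) (h : Inv t W A B) :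
    (∃ A1 B1, Inv t (qP * W * (∑ k ∈ Finset.range t, (qP + X * W)^k)) A1 B1) ∧
    (∃ A0 B0, Inv t (qP * W * (∑ k ∈ Finset.range t, (qP + X * W)^k) + (qP + X * W)^t) A0 B0) := by
  obtain ⟨hA0, hA1, hB, hval⟩ := h
  obtain ⟨s, hs⟩ : ∃ s : ℝ, s = 2^t := ⟨_, rfl⟩
  have hs2 : (2:ℝ) ≤ s := by
    rw [hs]
    calc (2:ℝ) = 2^1 := (pow_one 2).symm
      _ ≤ 2^t := pow_le_pow_right₀ (by norm_num) ht
  have hs0 : (0:ℝ) < s := by linarith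
  have hhalf : ((1/2:ℝ))^t = 1/s := by rw [hs, div_pow, one_pow]
  have h2t : (2:ℝ)^(2*t) = s^2 := by rw [hs, ← pow_mul, mul_comm]
  obtain ⟨u, hu⟩ : ∃ u : ℝ, u = 1/s := ⟨_, rfl⟩
  have hus : u * s = 1 := by rw [hu]; field_simp
  have hhalfu : ((1/2:ℝ))^t = u := by rw [hhalf, hu]
  have hsinv1 : u ≤ 1/2 := by
    rw [hu, div_le_div_iff₀ hs0 (by norm_num)]; linarith
  have hsinv0 : 0 < u := by rw [hu]; positivity
  obtain ⟨sig0, hsig0def⟩ : ∃ v : ℝ, v = ∑ k ∈ Finset.range t, (1/2:ℝ)^k := ⟨_, rfl⟩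
  obtain ⟨sig1, hsig1def⟩ : ∃ v : ℝ, v = ∑ k ∈ Finset.range t, (k:ℝ)*(1/2:ℝ)^(k-1) := ⟨_, rfl⟩
  obtain ⟨sig3, hsig3def⟩ : ∃ v : ℝ, v = ∑ k ∈ Finset.range t, (k:ℝ)*(3/5:ℝ)^(k-1) := ⟨_, rfl⟩
  have hsig0 : sig0 = 2 - 2*u := by
    rw [hsig0def, geom_sum_eq (by norm_num : (1/2:ℝ) ≠ 1), hhalfu,
      div_eq_iff (by norm_num : (1/2:ℝ) - 1 ≠ 0)]
    ring
  have hsig0a : 1 ≤ sig0 := by rw [hsig0]; linarith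
  have hsig0b : sig0 ≤ 2 := by rw [hsig0]; linarith
  have hsig1a : 0 ≤ sig1 := by
    rw [hsig1def]; exact Finset.sum_nonneg (fun k _ => by positivity)
  have hsig1b : sig1 ≤ 4 := by
    have h4 := sum_k_le (x := 1/2) (by norm_num) (by norm_num) t
    rw [← hsig1def] at h4
    norm_num at h4
    linarith
  have hsig3a : 0 ≤ sig3 := by
    rw [hsig3def]; exact Finset.sum_nonneg (fun k _ => by positivity)
  have hsig3b : sig3 ≤ 25/4 := by
    have h4 := sum_k_le (x := 3/5) (by norm_num) (by norm_num) t
    rw [← hsig3def] at h4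
    norm_num at h4
    linarith
  -- first-order data
  obtain ⟨g1, hg1def⟩ : ∃ v : ℝ, v = A - 1/2 := ⟨_, rfl⟩
  have hg1 : |g1| ≤ 1/2 := abs_le.mpr ⟨by rw [hg1def]; linarith, by rw [hg1def]; linarith⟩
  obtain ⟨A1, hA1def⟩ : ∃ v : ℝ, v = A*sig0/2 := ⟨_, rfl⟩
  obtain ⟨B1, hB1def⟩ : ∃ v : ℝ, v = B*sig0/2 + A*((1/2)*(g1*sig1) + sig0*(-1/2)) := ⟨_, rfl⟩
  have habsA : |A| ≤ 1 := abs_le.mpr ⟨by linarith, hA1⟩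
  have htg : |(t:ℝ)*(1/2:ℝ)^(t-1)*g1| ≤ 1/2 := by
    rw [abs_mul]
    rw [abs_of_nonneg (by positivity : (0:ℝ) ≤ (t:ℝ)*(1/2:ℝ)^(t-1))]
    have h2 : (t:ℝ)*(1/2:ℝ)^(t-1)* |g1| ≤ (t:ℝ)*(1/2:ℝ)^(t-1)*(1/2) :=
      mul_le_mul_of_nonneg_left hg1 (by positivity)
    have h3 : (t:ℝ)*(1/2:ℝ)^(t-1)*(1/2) = (t:ℝ)*(1/2:ℝ)^t := by
      rw [mul_comm ((t:ℝ)*(1/2:ℝ)^(t-1)) (1/2:ℝ), half_shift (1/2) (by norm_num) t]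
    have h4 : (t:ℝ)*(1/2:ℝ)^t ≤ 1/2 := by
      rw [hhalf, mul_one_div, div_le_div_iff₀ hs0 (by norm_num)]
      have h5 := two_t_le t ht
      rw [← hs] at h5
      linarith
    linarith
  have hgsig : |g1*sig1| ≤ 2 := by
    rw [abs_mul, abs_of_nonneg hsig1a]
    calc |g1| *sig1 ≤ (1/2)*4 := mul_le_mul hg1 hsig1b hsig1a (by norm_num)
      _ = 2 := by norm_num
  have hbqS : |(1/2)*(g1*sig1) + sig0*(-1/2)| ≤ 2 := by
    have hh1 : |(1/2:ℝ)*(g1*sig1)| = (1/2)* |g1*sig1| := by rw [abs_mul]; norm_num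
    have hh2 : |sig0*(-1/2:ℝ)| = sig0*(1/2) := by
      rw [abs_mul, abs_of_nonneg (by linarith : (0:ℝ) ≤ sig0)]
      norm_num
    calc |(1/2)*(g1*sig1) + sig0*(-1/2)| ≤ |(1/2:ℝ)*(g1*sig1)| + |sig0*(-1/2:ℝ)| := abs_add_le _ _
      _ = (1/2)* |g1*sig1| + sig0*(1/2) := by rw [hh1, hh2]
      _ ≤ (1/2)*2 + 2*(1/2) := by
          have u1 := mul_le_mul_of_nonneg_left hgsig (by norm_num : (0:ℝ) ≤ (1/2:ℝ))
          have u2 := mul_le_mul_of_nonneg_right hsig0b (by norm_num : (0:ℝ) ≤ (1/2:ℝ))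
          linarith
      _ = 2 := by norm_num
  have hBs : |B| ≤ 5/2*s := by rw [hs]; exact hB
  have hB1b : |B1| ≤ 5/2*s - 1/2 := by
    have e1 : |B*sig0/2| ≤ (5/2*s)*sig0/2 := by
      rw [abs_div, abs_mul, abs_of_nonneg (by linarith : (0:ℝ) ≤ sig0),
        abs_of_nonneg (by norm_num : (0:ℝ) ≤ (2:ℝ))]
      have := mul_le_mul_of_nonneg_right hBs (by linarith : (0:ℝ) ≤ sig0)
      linarith
    have e2 : |A*((1/2)*(g1*sig1) + sig0*(-1/2))| ≤ 2 := by
      rw [abs_mul]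
      calc |A| * |(1/2)*(g1*sig1) + sig0*(-1/2)| ≤ 1*2 :=
            mul_le_mul habsA hbqS (abs_nonneg _) (by norm_num)
        _ = 2 := by norm_num
    have e3 : (5/2*s)*sig0/2 ≤ 5/2*s - 5/2 := by
      rw [hsig0]
      have e4 : (5/2*s)*(2 - 2*u)/2 = 5/2*s - 5/2 := by linear_combination (-5/2)*hus
      exact e4.le
    calc |B1| = |B*sig0/2 + A*((1/2)*(g1*sig1) + sig0*(-1/2))| := by rw [hB1def]
      _ ≤ |B*sig0/2| + |A*((1/2)*(g1*sig1) + sig0*(-1/2))| := abs_add_le _ _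
      _ ≤ (5/2*s - 5/2) + 2 := by linarith
      _ = 5/2*s - 1/2 := by ring
  have hA1mem : 0 ≤ A1 ∧ A1 + u ≤ 1 := by
    constructor
    · rw [hA1def]
      have : (0:ℝ) ≤ A*sig0 := mul_nonneg hA0 (by linarith)
      linarith
    · rw [hA1def, hsig0]
      have hprod : 0 ≤ (1 - A)*(1 - u) := mul_nonneg (by linarith) (by linarith)
      have hx : A*(2-2*u)/2 + u - 1 = -((1 - A)*(1 - u)) := by ring
      linarith only [hprod, hx]
  -- per-point estimates
  have key : ∀ p ∈ Set.Icc (0:ℝ) ((1/2)^t/420),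
      (0 ≤ (qP * W * (∑ k ∈ Finset.range t, (qP + X * W)^k)).eval p ∧
       (qP * W * (∑ k ∈ Finset.range t, (qP + X * W)^k)).eval p +
         ((qP + X * W)^t).eval p ≤ 1 ∧
       0 ≤ ((qP + X * W)^t).eval p ∧
       |(qP * W * (∑ k ∈ Finset.range t, (qP + X * W)^k)).eval p - A1 - B1*p|
         ≤ (30*2^(2*t) - (18/7*s + 11/10)*(6/5))*p^2 ∧
       |((qP + X * W)^t).eval p - (1/2)^t - ((t:ℝ)*(1/2:ℝ)^(t-1)*g1)*p|
         ≤ ((18/7*s + 11/10)*(6/5))*p^2) := by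
    intro p hp
    obtain ⟨hp0, hp1'⟩ := hp
    have hp1 : p ≤ (1/s)/420 := by rw [← hhalf]; exact hp1'
    have hp840 : p ≤ 1/840 := by
      have : (1/s)/420 ≤ (1/2)/420 := by
        apply div_le_div_of_nonneg_right _ (by norm_num)
        rw [← hu]; exact hsinv1
      calc p ≤ (1/s)/420 := hp1
        _ ≤ (1/2)/420 := this
        _ = 1/840 := by norm_num
    obtain ⟨hw0, hw1, hw⟩ := hval p ⟨hp0, hp1'⟩
    obtain ⟨w, hwdef⟩ : ∃ w : ℝ, w = W.eval p := ⟨_, rfl⟩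
    rw [← hwdef] at hw0 hw1 hw
    obtain ⟨q, hqdef⟩ : ∃ q : ℝ, q = (1-p)/2 := ⟨_, rfl⟩
    obtain ⟨g, hgdef⟩ : ∃ g : ℝ, g = q + p*w := ⟨_, rfl⟩
    obtain ⟨S, hSdef⟩ : ∃ S : ℝ, S = ∑ k ∈ Finset.range t, g^k := ⟨_, rfl⟩
    have hqe : qP.eval p = q := by simp [qP, hqdef]; ring
    have hge : (qP + X * W).eval p = g := by
      simp [qP, hgdef, hqdef, ← hwdef]; ring
    have hgke : ∀ k : ℕ, ((qP + X * W)^k).eval p = g^k := by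
      intro k; rw [eval_pow, hge]
    have heval1 : (qP * W * (∑ k ∈ Finset.range t, (qP + X * W)^k)).eval p = q*w*S := by
      rw [eval_mul, eval_mul, hqe, eval_finset_sum, ← hwdef, hSdef]
      congr 1
      exact Finset.sum_congr rfl (fun k _ => hgke k)
    have hevalt : ((qP + X * W)^t).eval p = g^t := hgke t
    -- basic positivity
    have hq0 : 0 ≤ q := by rw [hqdef]; linarith
    have hq12 : q ≤ 1/2 := by rw [hqdef]; linarith
    have hg0 : 0 ≤ g := by rw [hgdef]; positivity
    have hgub : g ≤ (1+p)/2 := by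
      rw [hgdef, hqdef]
      have := mul_le_mul_of_nonneg_left hw1 hp0
      rw [mul_one] at this
      linarith only [this]
    have hgle : |g| ≤ 3/5 := by
      rw [abs_of_nonneg hg0]
      calc g ≤ (1+p)/2 := hgub
        _ ≤ (1+1/840)/2 := by linarith
        _ ≤ 3/5 := by norm_num
    have hS0 : 0 ≤ S := by
      rw [hSdef]; exact Finset.sum_nonneg (fun k _ => pow_nonneg hg0 k)
    have hgt0 : 0 ≤ g^t := pow_nonneg hg0 t
    -- value bounds
    have hgeom : (1-g)*S = 1 - g^t := by
      have hgm := geom_sum_mul g t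
      rw [hSdef]
      linear_combination (-1 : ℝ) * hgm
    have hq_le : q ≤ 1 - g := by
      rw [hgdef, hqdef]
      have := mul_le_mul_of_nonneg_left hw1 hp0
      rw [mul_one] at this
      linarith only [this]
    have hqS_le : q*S ≤ 1 - g^t := by
      calc q*S ≤ (1-g)*S := mul_le_mul_of_nonneg_right hq_le hS0
        _ = 1 - g^t := hgeom
    have hqwS0 : 0 ≤ q*w*S := by positivity
    have hqwS1 : q*w*S + g^t ≤ 1 := by
      have hqw : q*w*S ≤ q*S := by
        have h6 : q*w ≤ q*1 := mul_le_mul_of_nonneg_left hw1 hq0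
        have h7 : (q*w)*S ≤ (q*1)*S := mul_le_mul_of_nonneg_right h6 hS0
        rw [mul_one] at h7
        exact h7
      linarith [hqS_le]
    -- approximation chain
    have hKp : (30*2^(2*t))*p ≤ s/14 := by
      rw [h2t]
      calc (30*s^2)*p ≤ 30*s^2*((1/s)/420) := by
            apply mul_le_mul_of_nonneg_left hp1 (by positivity)
        _ = s/14 := by field_simp; ring
    have hg_approx : |g - 1/2 - g1*p| ≤ (18/7*s)*p^2 := by
      have hid : g - 1/2 - g1*p = p*(w - A) := by
        rw [hgdef, hqdef, hg1def]; ring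
      rw [hid, abs_mul, abs_of_nonneg hp0]
      have h1 : |w - A| ≤ (30*2^(2*t))*p^2 + (5/2*s)*p := by
        calc |w - A| = |(w - A - B*p) + B*p| := by ring_nf
          _ ≤ |w - A - B*p| + |B*p| := abs_add_le _ _
          _ ≤ (30*2^(2*t))*p^2 + (5/2*s)*p := by
              rw [abs_mul, abs_of_nonneg hp0]
              have := mul_le_mul_of_nonneg_right hBs hp0
              linarith [hw]
      calc p* |w - A| ≤ p*((30*2^(2*t))*p^2 + (5/2*s)*p) :=
            mul_le_mul_of_nonneg_left h1 hp0
        _ = ((30*2^(2*t))*p)*p^2 + (5/2*s)*p^2 := by ring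
        _ ≤ (s/14)*p^2 + (5/2*s)*p^2 := by
            have := mul_le_mul_of_nonneg_right hKp (by positivity : (0:ℝ) ≤ p^2)
            linarith
        _ = (18/7*s)*p^2 := by ring
    have hKg0 : (0:ℝ) ≤ 18/7*s := by positivity
    have hKgp : (18/7*s)*p ≤ 1/100 := by
      calc (18/7*s)*p ≤ (18/7*s)*((1/s)/420) := by
            apply mul_le_mul_of_nonneg_left hp1 (by positivity)
        _ = 18/2940 := by field_simp; ring
        _ ≤ 1/100 := by norm_num
    have hpow := approx_pow hp0 hg_approx hg1 hgle hKg0 hKgp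
    -- the sum S
    have hSd : S - sig0 - (g1*sig1)*p
        = ∑ k ∈ Finset.range t, (g^k - (1/2)^k - ((k:ℝ)*(1/2:ℝ)^(k-1)*g1)*p) := by
      rw [Finset.sum_sub_distrib, Finset.sum_sub_distrib, ← hSdef, ← hsig0def]
      have e : ∑ k ∈ Finset.range t, ((k:ℝ)*(1/2:ℝ)^(k-1)*g1)*p
          = (g1*sig1)*p := by
        rw [hsig1def, Finset.mul_sum, Finset.sum_mul]
        apply Finset.sum_congr rfl
        intro k _
        ring
      rw [e]
    have hS : |S - sig0 - (g1*sig1)*p| ≤ ((18/7*s + 11/10)*sig3)*p^2 := by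
      rw [hSd]
      calc |∑ k ∈ Finset.range t, (g^k - (1/2)^k - ((k:ℝ)*(1/2:ℝ)^(k-1)*g1)*p)|
          ≤ ∑ k ∈ Finset.range t, |g^k - (1/2)^k - ((k:ℝ)*(1/2:ℝ)^(k-1)*g1)*p| :=
            Finset.abs_sum_le_sum_abs _ _
        _ ≤ ∑ k ∈ Finset.range t, ((18/7*s + 11/10)*((k:ℝ)*(3/5:ℝ)^(k-1)))*p^2 :=
            Finset.sum_le_sum (fun k _ => hpow k)
        _ = ((18/7*s + 11/10)*sig3)*p^2 := by
            rw [hsig3def, ← Finset.sum_mul, ← Finset.mul_sum]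
    have hMS : |S| ≤ 5/2 := by
      rw [hSdef]
      calc |∑ k ∈ Finset.range t, g^k| ≤ ∑ k ∈ Finset.range t, |g^k| :=
            Finset.abs_sum_le_sum_abs _ _
        _ = ∑ k ∈ Finset.range t, |g|^k := by
            apply Finset.sum_congr rfl; intro k _; rw [abs_pow]
        _ ≤ ∑ k ∈ Finset.range t, (3/5:ℝ)^k :=
            Finset.sum_le_sum (fun k _ => pow_le_pow_left₀ (abs_nonneg g) hgle k)
        _ ≤ 1/(1-3/5) := sum_pow_le (by norm_num) (by norm_num) t
        _ ≤ 5/2 := by norm_num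
    have hq_approx : |q - 1/2 - (-1/2)*p| ≤ 0*p^2 := by
      have hz : q - 1/2 - (-1/2)*p = 0 := by rw [hqdef]; ring
      rw [hz]; simp
    have hqS := approx_mul (e := 0) (My := 5/2) hp0 hq_approx hS hMS
    have habsw : |w| ≤ 1 := abs_le.mpr ⟨by linarith, hw1⟩
    have hqSw := approx_mul (My := 1) hp0 hqS hw habsw
    rw [show q*S*w - 1/2*sig0*A - (1/2*sig0*B + A*(1/2*(g1*sig1) + sig0*(-1/2)))*p
        = q*w*S - A1 - B1*p from by rw [hA1def, hB1def]; ring] at hqSw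
    -- numeric bound on the error coefficient
    have habs12 : |(1/2:ℝ)| = 1/2 := by norm_num
    have habsm12 : |(-1/2:ℝ)| = 1/2 := by norm_num
    have habs12s : |(1/2:ℝ)*sig0| = 1/2*sig0 := abs_of_nonneg (by linarith)
    rw [habs12, habsm12, habs12s] at hqSw
    have herr : ((0*(5/2) + (1/2 + 1/2*p)*((18/7*s + 11/10)*sig3) + 1/2* |g1*sig1|)*1
        + (1/2*sig0 + |1/2*(g1*sig1) + sig0*(-1/2)| * p)*(30*2^(2*t))
        + |1/2*(g1*sig1) + sig0*(-1/2)| * |B|)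
        ≤ 30*2^(2*t) - (18/7*s + 11/10)*(6/5) := by
      rw [h2t]
      have hT0 : (0:ℝ) ≤ 18/7*s + 11/10 := by positivity
      have c1 : (18/7*s + 11/10)*sig3 ≤ (18/7*s + 11/10)*(25/4) :=
        mul_le_mul_of_nonneg_left hsig3b hT0
      have c1' : (0:ℝ) ≤ (18/7*s + 11/10)*sig3 := mul_nonneg hT0 hsig3a
      have c2 : (1/2 + 1/2*p) ≤ 51/100 := by linarith
      have c3 : (1/2 + 1/2*p)*((18/7*s + 11/10)*sig3)
          ≤ (51/100)*((18/7*s + 11/10)*(25/4)) := by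
        apply mul_le_mul c2 c1 c1' (by norm_num)
      have c4 : (1/2:ℝ)* |g1*sig1| ≤ 1 := by linarith [hgsig]
      have hsu : (1:ℝ)/2*sig0*(30*s^2) = 30*s^2 - 30*s := by
        rw [hsig0]
        have husq : u*s^2 = s := by linear_combination s*hus
        linear_combination (-30)*husq
      have c5 : |1/2*(g1*sig1) + sig0*(-1/2)| * p * (30*s^2) ≤ s/7 := by
        have d1 : |1/2*(g1*sig1) + sig0*(-1/2)| * p ≤ 2*p :=
          mul_le_mul_of_nonneg_right hbqS hp0
        have d2 : (30*s^2)*p ≤ s/14 := by rw [← h2t]; exact hKp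
        calc |1/2*(g1*sig1) + sig0*(-1/2)| * p * (30*s^2) ≤ 2*p*(30*s^2) := by
              apply mul_le_mul_of_nonneg_right d1 (by positivity)
          _ = 2*((30*s^2)*p) := by ring
          _ ≤ 2*(s/14) := by linarith
          _ = s/7 := by ring
      have c6 : |1/2*(g1*sig1) + sig0*(-1/2)| * |B| ≤ 2*(5/2*s) :=
        mul_le_mul hbqS hBs (abs_nonneg _) (by norm_num)
      have c7 : (1/2*sig0 + |1/2*(g1*sig1) + sig0*(-1/2)| * p)*(30*s^2)
          = 1/2*sig0*(30*s^2) + |1/2*(g1*sig1) + sig0*(-1/2)| * p * (30*s^2) := by ring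
      rw [c7, hsu]
      linarith only [c3, c4, c5, c6, hs2]
    have hfinal1 : |q*w*S - A1 - B1*p|
        ≤ (30*2^(2*t) - (18/7*s + 11/10)*(6/5))*p^2 := by
      calc |q*w*S - A1 - B1*p| ≤ _ := hqSw
        _ ≤ (30*2^(2*t) - (18/7*s + 11/10)*(6/5))*p^2 :=
            mul_le_mul_of_nonneg_right herr (by positivity)
    have hfinalt : |g^t - (1/2)^t - ((t:ℝ)*(1/2:ℝ)^(t-1)*g1)*p|
        ≤ ((18/7*s + 11/10)*(6/5))*p^2 := by
      have hT0 : (0:ℝ) ≤ 18/7*s + 11/10 := by positivity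
      calc |g^t - (1/2)^t - ((t:ℝ)*(1/2:ℝ)^(t-1)*g1)*p|
          ≤ ((18/7*s + 11/10)*((t:ℝ)*(3/5:ℝ)^(t-1)))*p^2 := hpow t
        _ ≤ ((18/7*s + 11/10)*(6/5))*p^2 := by
            apply mul_le_mul_of_nonneg_right _ (by positivity : (0:ℝ) ≤ p^2)
            exact mul_le_mul_of_nonneg_left (t_pow_le t) hT0
    rw [heval1, hevalt]
    exact ⟨hqwS0, hqwS1, hgt0, hfinal1, hfinalt⟩
  -- assemble
  have hT0' : (0:ℝ) ≤ (18/7*s + 11/10)*(6/5) := by positivity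
  have hB1f : |B1| ≤ 5/2*2^t := by rw [← hs]; linarith
  constructor
  · refine ⟨A1, B1, hA1mem.1, by linarith [hA1mem.2, hsinv0], hB1f, ?_⟩
    intro p hp
    obtain ⟨k1, k2, k3, k4, _⟩ := key p hp
    refine ⟨k1, by linarith, ?_⟩
    calc |(qP * W * (∑ k ∈ Finset.range t, (qP + X * W)^k)).eval p - A1 - B1*p|
        ≤ (30*2^(2*t) - (18/7*s + 11/10)*(6/5))*p^2 := k4
      _ ≤ 30*2^(2*t)*p^2 := by
          apply mul_le_mul_of_nonneg_right _ (by positivity : (0:ℝ) ≤ p^2)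
          linarith
  · refine ⟨A1 + (1/2)^t, B1 + (t:ℝ)*(1/2:ℝ)^(t-1)*g1, ?_, ?_, ?_, ?_⟩
    · rw [hhalfu]; linarith [hA1mem.1, hsinv0]
    · rw [hhalfu]; exact hA1mem.2
    · calc |B1 + (t:ℝ)*(1/2:ℝ)^(t-1)*g1| ≤ |B1| + |(t:ℝ)*(1/2:ℝ)^(t-1)*g1| := abs_add_le _ _
        _ ≤ (5/2*s - 1/2) + 1/2 := by linarith [htg]
        _ = 5/2*s := by ring
        _ = 5/2*2^t := by rw [hs]
    · intro p hp
      obtain ⟨k1, k2, k3, k4, k5⟩ := key p hp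
      refine ⟨by rw [eval_add]; linarith [k1, k3], by rw [eval_add]; linarith [k2], ?_⟩
      rw [eval_add]
      have hdecomp : (qP * W * (∑ k ∈ Finset.range t, (qP + X * W)^k)).eval p
            + ((qP + X * W)^t).eval p - (A1 + (1/2)^t)
            - (B1 + (t:ℝ)*(1/2:ℝ)^(t-1)*g1)*p
          = ((qP * W * (∑ k ∈ Finset.range t, (qP + X * W)^k)).eval p - A1 - B1*p)
            + (((qP + X * W)^t).eval p - (1/2)^t - ((t:ℝ)*(1/2:ℝ)^(t-1)*g1)*p) := by
        ring
      rw [hdecomp]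
      calc |_ + _| ≤ _ := abs_add_le _ _
        _ ≤ (30*2^(2*t) - (18/7*s + 11/10)*(6/5))*p^2 + ((18/7*s + 11/10)*(6/5))*p^2 := by
            linarith [k4, k5]
        _ = 30*2^(2*t)*p^2 := by ring


lemma base (t : ℕ) (ht : 1 ≤ t) :
    Inv t (qP^t) ((1/2)^t) (-(t:ℝ)*(1/2)^t) ∧
    Inv t (1 - (1 - qP)^t) (1 - (1/2)^t) (-(t:ℝ)*(1/2)^t) := by
  have h2t : ((1:ℝ)/2)^t ≤ 1 := pow_le_one₀ (by norm_num) (by norm_num)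
  have h2t0 : (0:ℝ) < (1/2:ℝ)^t := by positivity
  have htt := two_t_le t ht
  have ht2 : (t:ℝ) ≤ 2^t := by linarith [Nat.cast_nonneg (α := ℝ) t]
  have hBb : |(-(t:ℝ)*(1/2)^t)| ≤ 5/2*2^t := by
    rw [abs_mul, abs_neg, abs_of_nonneg (Nat.cast_nonneg (α := ℝ) t),
      abs_of_nonneg (le_of_lt h2t0)]
    have hp2 : (0:ℝ) < 2^t := by positivity
    have h1t : (1:ℝ) ≤ (t:ℝ) := by exact_mod_cast ht
    have h12t : (1:ℝ) ≤ 2^t := by linarith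
    have hle : (t:ℝ)*(1/2)^t ≤ 1/2 := by
      rw [div_pow, one_pow, mul_one_div, div_le_div_iff₀ hp2 (by norm_num)]
      linarith
    calc (t:ℝ)*(1/2)^t ≤ 1/2 := hle
      _ ≤ 5/2*2^t := by linarith
  have hKbig : ∀ p : ℝ, (t:ℝ)^2*p^2 ≤ 30*2^(2*t)*p^2 := by
    intro p
    apply mul_le_mul_of_nonneg_right _ (sq_nonneg p)
    have : (t:ℝ)^2 ≤ (2^t)^2 := by nlinarith [Nat.cast_nonneg (α := ℝ) t]
    calc (t:ℝ)^2 ≤ (2^t:ℝ)^2 := this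
      _ = 2^(2*t) := by rw [← pow_mul, mul_comm]
      _ ≤ 30*2^(2*t) := by nlinarith [pow_pos (by norm_num : (0:ℝ) < 2) (2*t)]
  constructor
  · refine ⟨le_of_lt h2t0, h2t, hBb, ?_⟩
    intro p ⟨hp0, hp1⟩
    have hp840 : p ≤ 1/840 := by
      calc p ≤ (1/2)^t/420 := hp1
        _ ≤ (1/2)^1/420 := by
            apply div_le_div_of_nonneg_right _ (by norm_num)
            exact pow_le_pow_of_le_one (by norm_num) (by norm_num) ht
        _ ≤ 1/840 := by norm_num
    have he : (qP^t).eval p = (1/2)^t * (1-p)^t := by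
      rw [eval_pow]
      rw [show qP.eval p = (1/2)*(1-p) from by simp [qP]]
      rw [mul_pow]
    have h1p0 : (0:ℝ) ≤ 1-p := by linarith
    have h1p1 : (1-p:ℝ) ≤ 1 := by linarith
    refine ⟨by rw [he]; positivity, ?_, ?_⟩
    · rw [he]
      have hb : (1-p:ℝ)^t ≤ 1 := pow_le_one₀ h1p0 h1p1
      have hq := mul_le_mul h2t hb (pow_nonneg h1p0 t) (by norm_num : (0:ℝ) ≤ 1)
      linarith
    · rw [he]
      have hid : (1/2:ℝ)^t * (1-p)^t - (1/2)^t - (-(t:ℝ)*(1/2)^t)*p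
          = (1/2)^t * ((1-p)^t - 1 + (t:ℝ)*p) := by ring
      rw [hid, abs_mul, abs_of_nonneg (le_of_lt h2t0)]
      have hmm : (1/2:ℝ)^t * |(1-p)^t - 1 + (t:ℝ)*p| ≤ 1 * ((t:ℝ)^2*p^2) :=
        mul_le_mul h2t (bern_neg p hp0 (by linarith) t) (abs_nonneg _) (by norm_num)
      linarith [hKbig p]
  · refine ⟨by linarith, by linarith, hBb, ?_⟩
    intro p ⟨hp0, hp1⟩
    have hp840 : p ≤ 1/840 := by
      calc p ≤ (1/2)^t/420 := hp1
        _ ≤ (1/2)^1/420 := by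
            apply div_le_div_of_nonneg_right _ (by norm_num)
            exact pow_le_pow_of_le_one (by norm_num) (by norm_num) ht
        _ ≤ 1/840 := by norm_num
    have he : ((1 - (1 - qP)^t)).eval p = 1 - (1/2)^t * (1+p)^t := by
      simp only [eval_sub, eval_one, eval_pow]
      rw [show (1:ℝ) - qP.eval p = (1/2)*(1+p) from by simp [qP]; ring]
      rw [mul_pow]
    have h1p0 : (0:ℝ) ≤ 1+p := by linarith
    have hub : (1/2:ℝ)^t * (1+p)^t ≤ 1 := by
      have : ((1:ℝ)/2*(1+p))^t ≤ 1 := pow_le_one₀ (by linarith) (by linarith)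
      rw [mul_pow] at this
      exact this
    refine ⟨by rw [he]; linarith, by rw [he]; linarith [show (0:ℝ) ≤ (1/2)^t*(1+p)^t from by positivity], ?_⟩
    · rw [he]
      have hid : 1 - (1/2:ℝ)^t * (1+p)^t - (1 - (1/2)^t) - (-(t:ℝ)*(1/2)^t)*p
          = -((1/2)^t * ((1+p)^t - 1 - (t:ℝ)*p)) := by ring
      rw [hid, abs_neg, abs_mul, abs_of_nonneg (le_of_lt h2t0)]
      have hbp := bern_pos p hp0 (by linarith) t
      calc (1/2:ℝ)^t * |(1+p)^t - 1 - (t:ℝ)*p| ≤ (1/2)^t * (2^t*(t:ℝ)^2*p^2) :=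
            mul_le_mul_of_nonneg_left hbp (le_of_lt h2t0)
        _ = (t:ℝ)^2*p^2 := by
            rw [div_pow, one_pow]
            field_simp
        _ ≤ 30*2^(2*t)*p^2 := hKbig p


lemma main (t : ℕ) (ht : 1 ≤ t) : ∀ r : ℕ,
    (∃ A B, Inv t ((PP t (r+1)).1) A B) ∧ (∃ A B, Inv t ((PP t (r+1)).2) A B) := by
  intro r
  induction r with
  | zero =>
    have hb := base t ht
    exact ⟨⟨_, _, hb.1⟩, ⟨_, _, hb.2⟩⟩
  | succ r ih =>
    obtain ⟨⟨A0, B0, h0⟩, ⟨A1', B1', h1⟩⟩ := ih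
    obtain ⟨Aa, Ba, ha⟩ := (core t ht ((PP t (r+1)).2) A1' B1' h1).2
    obtain ⟨Ab, Bb, hbb⟩ := (core t ht ((PP t (r+1)).1) A0 B0 h0).1
    exact ⟨⟨Aa, Ba, ha⟩, ⟨Ab, Bb, hbb⟩⟩

end PPTail

/-- for every `r ≥ 1`, `i ∈ {0,1}` and `0 ≤ p ≤ 2^{−t}/420`, the tail
of `P_i(r)` beyond the linear term satisfies `|∑_{j≥2}([p^j]P_i(r))·p^{j−2}| ≤ 30·2^{2t}`. -/
theorem ppoly_tail_bound (t : ℕ) (ht : 1 ≤ t) (r : ℕ) (hr : 1 ≤ r)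
    (p : ℝ) (hp0 : 0 ≤ p) (hp1 : p ≤ (1 / 2 : ℝ) ^ t / 420) :
    |∑ j ∈ Finset.Icc 2 (P0poly t r).natDegree, (P0poly t r).coeff j * p ^ (j - 2)| ≤
        30 * 2 ^ (2 * t) ∧
      |∑ j ∈ Finset.Icc 2 (P1poly t r).natDegree, (P1poly t r).coeff j * p ^ (j - 2)| ≤
        30 * 2 ^ (2 * t) := by
  obtain ⟨r', rfl⟩ : ∃ r', r = r' + 1 := ⟨r - 1, by omega⟩
  obtain ⟨⟨A0, B0, h0⟩, ⟨A1, B1, h1⟩⟩ := PPTail.main t ht r'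
  have hε : (0:ℝ) < (1/2:ℝ)^t/420 := by positivity
  have hK : (0:ℝ) ≤ 30*2^(2*t) := by positivity
  have hpmem : p ∈ Set.Icc (0:ℝ) ((1/2)^t/420) := ⟨hp0, hp1⟩
  constructor
  · exact PPTail.tail_bound_of_good (P0poly t (r'+1)) (30*2^(2*t)) A0 B0 ((1/2)^t/420)
      hε hK (fun x hx => (h0.2.2.2 x ⟨hx.1.le, hx.2⟩).2.2) p hpmem
  · exact PPTail.tail_bound_of_good (P1poly t (r'+1)) (30*2^(2*t)) A1 B1 ((1/2)^t/420)
      hε hK (fun x hx => (h1.2.2.2 x ⟨hx.1.le, hx.2⟩).2.2) p hpmem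
end
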